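/- Consider the van der Pol critical curve f(x) = x²/2 + x³/3 and g(x) = −x. For s ∈ (0, 1/6), let α₁(s) ∈ (−1,0) and ω₁(s) ∈ (0,∞) be the two solutions of f(x) = s with α₁(s) < 0 < ω₁(s). Then the slow divergence integral Ĩ(s) = −∫_{α₁(s)}^{ω₁(s)} x(1+x)² dx is strictly negative for all s ∈ (0,1/6). -/

import Mathlib

open Set intervalIntegral

/-- For the van der Pol system with critical curve `f(x) = x²/2 + x³/3`, the slow
divergence integral `Ĩ(s) = −∫_{α₁(s)}^{ω₁(s)} x(1+x)² dx` is strictly negative for all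
`s ∈ (0,1/6)`, where `α₁(s) ∈ (−1,0)` and `ω₁(s) > 0` solve `f(x) = s`. -/
theorem stmt13 (s α ω : ℝ) (hs : s ∈ Ioo 0 (1/6 : ℝ))
    (hα : α ∈ Ioo (-1 : ℝ) 0) (hω : 0 < ω)
    (hfα : α ^ 2 / 2 + α ^ 3 / 3 = s)
    (hfω : ω ^ 2 / 2 + ω ^ 3 / 3 = s) :
    -(∫ x in α..ω, x * (1 + x) ^ 2) < 0 := by
  have hd : ∀ x : ℝ, HasDerivAt (fun x : ℝ => x ^ 2 / 2 + 2 * x ^ 3 / 3 + x ^ 4 / 4)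
      (x * (1 + x) ^ 2) x := by
    intro x
    have h := (((hasDerivAt_pow 2 x).div_const 2).add
        (((hasDerivAt_pow 3 x).const_mul 2).div_const 3)).add
        ((hasDerivAt_pow 4 x).div_const 4)
    refine h.congr_deriv ?_
    norm_num
    ring
  have key : (∫ x in α..ω, x * (1 + x) ^ 2)
      = (ω ^ 2 / 2 + 2 * ω ^ 3 / 3 + ω ^ 4 / 4) - (α ^ 2 / 2 + 2 * α ^ 3 / 3 + α ^ 4 / 4) := by
    refine intervalIntegral.integral_eq_sub_of_hasDerivAt (fun x _ => hd x) ?_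
    exact (Continuous.mul continuous_id (by continuity)).intervalIntegrable _ _
  rw [key]
  obtain ⟨hα1, hα0⟩ := hα
  have h3 : α ^ 3 < 0 := by
    have := mul_pos (mul_pos (neg_pos.2 hα0) (neg_pos.2 hα0)) (neg_pos.2 hα0)
    nlinarith [this]
  have h1 : α ^ 3 * (1 / 3 + α / 4) < 0 :=
    mul_neg_of_neg_of_pos h3 (by linarith)
  have h2 : 0 < ω ^ 3 / 3 + ω ^ 4 / 4 := by positivity
  nlinarith [h1, h2]
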